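/- Let (A, ∘, r) be a group with braiding arising from a skew brace (A, ∘, ·), with j₁(a) = (a, e) and ι(a) = (a, ā) in the twisted product group A ⋈ A. Then j₁(b) ∘_⋈ ι(a) = ι(ρ_b(a)) ∘_⋈ j₁(b) for all a, b ∈ A, where ρ_b(a) = (b ∘ a) · b⁻¹. Consequently the map (A, ∘) ⋉_ρ (A, ·) → A ⋈ A, (a, b) ↦ j₁(a) ∘_⋈ ι(b), is a group isomorphism from the semidirect product to the twisted product. -/
import Mathlib


structure SkewBrace (A : Type*) where
  circ : A → A → A
  cinv : A → A
  ce : A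
  mul : A → A → A
  inv : A → A
  e : A
  circ_assoc : ∀ a b c, circ (circ a b) c = circ a (circ b c)
  ce_circ : ∀ a, circ ce a = a
  circ_ce : ∀ a, circ a ce = a
  cinv_circ : ∀ a, circ (cinv a) a = ce
  circ_cinv : ∀ a, circ a (cinv a) = ce
  mul_assoc : ∀ a b c, mul (mul a b) c = mul a (mul b c)
  e_mul : ∀ a, mul e a = a
  mul_e : ∀ a, mul a e = a
  inv_mul : ∀ a, mul (inv a) a = e
  mul_inv : ∀ a, mul a (inv a) = e
  distrib : ∀ a b c, circ a (mul b c) = mul (mul (circ a b) (inv a)) (circ a c)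

def SkewBrace.lam {A : Type*} (B : SkewBrace A) (a b : A) : A :=
  B.mul (B.inv a) (B.circ a b)

def SkewBrace.rho {A : Type*} (B : SkewBrace A) (a b : A) : A :=
  B.mul (B.circ a b) (B.inv a)

/-! Auxiliary: abstract group laws. -/

structure GrpLaws {A : Type*} (op : A → A → A) (iv : A → A) (un : A) : Prop where
  assoc : ∀ a b c, op (op a b) c = op a (op b c)
  un_op : ∀ a, op un a = a
  op_un : ∀ a, op a un = a
  iv_op : ∀ a, op (iv a) a = un
  op_iv : ∀ a, op a (iv a) = un

namespace GrpLaws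

variable {A : Type*} {op : A → A → A} {iv : A → A} {un : A}

theorem cancel (G : GrpLaws op iv un) (a b : A) : op a (op (iv a) b) = b := by
  rw [← G.assoc, G.op_iv, G.un_op]

theorem cancel' (G : GrpLaws op iv un) (a b : A) : op (iv a) (op a b) = b := by
  rw [← G.assoc, G.iv_op, G.un_op]

theorem inv_unique (G : GrpLaws op iv un) {a b : A} (h : op a b = un) : b = iv a := by
  have h2 := congrArg (op (iv a)) h
  rwa [G.cancel', G.op_un] at h2

theorem iv_iv (G : GrpLaws op iv un) (a : A) : iv (iv a) = a := (G.inv_unique (G.iv_op a)).symm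

theorem iv_un (G : GrpLaws op iv un) : iv un = un := (G.inv_unique (G.un_op un)).symm

theorem iv_op_op (G : GrpLaws op iv un) (a b : A) : iv (op a b) = op (iv b) (iv a) :=
  (G.inv_unique (by rw [G.assoc, G.cancel, G.op_iv])).symm

end GrpLaws

namespace SkewBrace

variable {A : Type*} (B : SkewBrace A)

theorem grpC : GrpLaws B.circ B.cinv B.ce :=
  ⟨B.circ_assoc, B.ce_circ, B.circ_ce, B.cinv_circ, B.circ_cinv⟩

theorem grpM : GrpLaws B.mul B.inv B.e :=
  ⟨B.mul_assoc, B.e_mul, B.mul_e, B.inv_mul, B.mul_inv⟩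

theorem ce_eq : B.ce = B.e := by
  have h := B.distrib B.ce B.e B.e
  rw [B.ce_circ, B.ce_circ, B.e_mul, B.mul_e, B.e_mul] at h
  have h2 := B.inv_mul B.ce
  rw [← h, B.e_mul] at h2
  exact h2

theorem circ_eq (a b : A) : B.circ a b = B.mul a (B.lam a b) :=
  (B.grpM.cancel a _).symm

theorem lam_e (a : A) : B.lam a B.e = B.e := by
  have h : B.circ a B.e = a := by rw [← B.ce_eq]; exact B.circ_ce a
  rw [SkewBrace.lam, h, B.inv_mul]

theorem lam_mul (a b c : A) :
    B.lam a (B.mul b c) = B.mul (B.lam a b) (B.lam a c) := by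
  simp only [SkewBrace.lam, B.distrib, B.mul_assoc]

theorem lam_inv (a b : A) : B.lam a (B.inv b) = B.inv (B.lam a b) :=
  B.grpM.inv_unique (by rw [← B.lam_mul, B.mul_inv, B.lam_e])

theorem lam_lam (a b c : A) :
    B.lam a (B.lam b c) = B.lam (B.circ a b) c := by
  have h1 : B.circ a (B.inv b) = B.mul a (B.mul (B.inv (B.circ a b)) a) := by
    rw [B.circ_eq a (B.inv b), B.lam_inv]
    simp only [SkewBrace.lam, B.grpM.iv_op_op, B.grpM.iv_iv]
  simp only [SkewBrace.lam, B.distrib, h1, ← B.circ_assoc]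
  simp only [B.mul_assoc]
  rw [B.grpM.cancel', B.grpM.cancel]

theorem lam_ce (b : A) : B.lam B.ce b = b := by
  rw [lam, B.ce_circ, B.ce_eq, B.grpM.iv_un, B.e_mul]

theorem circ_lam_cinv (a b : A) :
    B.circ a (B.lam (B.cinv a) b) = B.mul a b := by
  rw [B.circ_eq a, B.lam_lam, B.circ_cinv, B.lam_ce]

theorem circ_inv_cinv (a : A) :
    B.circ a (B.inv (B.cinv a)) = B.mul a a := by
  have h : B.lam a (B.cinv a) = B.inv a := by
    rw [lam, B.circ_cinv, B.ce_eq, B.mul_e]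
  rw [B.circ_eq a, B.lam_inv, h, B.grpM.iv_iv]

end SkewBrace

/-- `j₁(b) ∘_⋈ ι(a) = ι(ρ_b(a)) ∘_⋈ j₁(b)`, and `(a, b) ↦ j₁(a) ∘_⋈ ι(b)` is a
group isomorphism from the semidirect product `(A, ∘) ⋉_ρ (A, ·)` onto `A ⋈ A`. -/
theorem semidirect_iso_twisted {A : Type*} (B : SkewBrace A)
    (r : A × A → A × A)
    (hr : ∀ a b, r (a, b) =
      (B.lam a b, B.circ (B.cinv (B.lam a b)) (B.circ a b)))
    (tm : A × A → A × A → A × A)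
    (htm : ∀ p q, tm p q =
      (B.circ p.1 ((r (p.2, q.1)).1), B.circ ((r (p.2, q.1)).2) q.2))
    (sdm : A × A → A × A → A × A)
    (hsdm : ∀ p q, sdm p q = (B.circ p.1 q.1, B.mul (B.rho (B.cinv q.1) p.2) q.2))
    (φ : A × A → A × A)
    (hφ : ∀ p, φ p = tm (p.1, B.ce) (p.2, B.cinv p.2)) :
    (∀ a b, tm (b, B.ce) (a, B.cinv a) =
      tm (B.rho b a, B.cinv (B.rho b a)) (b, B.ce)) ∧
    Function.Bijective φ ∧
    (∀ p q, φ (sdm p q) = tm (φ p) (φ q)) := by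
  have C := B.grpC
  have M := B.grpM
  -- simplified form of `tm (x, ce) (y, cinv y)`
  have key : ∀ x y : A, tm (x, B.ce) (y, B.cinv y) = (B.circ x y, B.cinv y) := by
    intro x y
    rw [htm, hr]
    simp only [B.lam_ce, B.ce_circ, B.cinv_circ]
  -- part 1
  have part1 : ∀ a b, tm (b, B.ce) (a, B.cinv a) =
      tm (B.rho b a, B.cinv (B.rho b a)) (b, B.ce) := by
    intro a b
    set ρ := B.rho b a with hρ
    have hρb : B.mul ρ b = B.circ b a := by
      rw [hρ, SkewBrace.rho, B.mul_assoc, B.inv_mul, B.mul_e]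
    have hℓ : B.circ ρ (B.lam (B.cinv ρ) b) = B.circ b a := by
      rw [B.circ_lam_cinv, hρb]
    have hℓ2 : B.lam (B.cinv ρ) b = B.circ (B.cinv ρ) (B.circ b a) := by
      have h := congrArg (B.circ (B.cinv ρ)) hℓ
      rwa [C.cancel'] at h
    rw [key, htm, hr]
    refine Prod.ext ?_ ?_
    · exact hℓ.symm
    · show B.cinv a =
        B.circ (B.circ (B.cinv (B.lam (B.cinv ρ) b)) (B.circ (B.cinv ρ) b)) B.ce
      rw [B.circ_ce, hℓ2, C.iv_op_op, C.iv_iv, C.iv_op_op]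
      simp only [C.assoc, C.cancel, C.cancel', C.op_iv, C.iv_op, C.op_un, C.un_op]
  -- simplified φ
  have hφ' : ∀ p : A × A, φ p = (B.circ p.1 p.2, B.cinv p.2) := by
    intro p; rw [hφ, key]
  refine ⟨part1, ?_, ?_⟩
  · -- bijective
    rw [Function.bijective_iff_has_inverse]
    refine ⟨fun q => (B.circ q.1 q.2, B.cinv q.2), fun p => ?_, fun q => ?_⟩
    · rw [hφ']
      refine Prod.ext ?_ ?_
      · show B.circ (B.circ p.1 p.2) (B.cinv p.2) = p.1
        rw [C.assoc, C.op_iv, C.op_un]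
      · exact C.iv_iv p.2
    · rw [hφ']
      refine Prod.ext ?_ ?_
      · show B.circ (B.circ q.1 q.2) (B.cinv q.2) = q.1
        rw [C.assoc, C.op_iv, C.op_un]
      · exact C.iv_iv q.2
  · -- homomorphism
    intro p q
    rw [hsdm, hφ', hφ', hφ', htm, hr]
    set m := B.mul (B.rho (B.cinv q.1) p.2) q.2 with hm
    set ℓ := B.lam (B.cinv p.2) (B.circ q.1 q.2) with hℓdef
    have hK : B.circ q.1 m = B.mul p.2 (B.circ q.1 q.2) := by
      rw [hm, SkewBrace.rho, B.distrib, B.distrib, C.cancel, B.circ_inv_cinv]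
      simp only [B.mul_assoc, M.cancel, M.cancel', M.iv_op, M.op_iv, M.op_un, M.un_op]
    have hE : B.circ q.1 m = B.circ p.2 ℓ := by
      rw [hK, hℓdef, B.circ_lam_cinv]
    have hℓ2 : ℓ = B.circ (B.cinv p.2) (B.circ q.1 m) := by
      have h := congrArg (B.circ (B.cinv p.2)) hE
      rw [C.cancel'] at h
      exact h.symm
    refine Prod.ext ?_ ?_
    · show B.circ (B.circ p.1 q.1) m = B.circ (B.circ p.1 p.2) ℓ
      rw [C.assoc, hE, C.assoc]
    · show B.cinv m =
        B.circ (B.circ (B.cinv ℓ) (B.circ (B.cinv p.2) (B.circ q.1 q.2))) (B.cinv q.2)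
      rw [hℓ2, C.iv_op_op, C.iv_op_op]
      simp only [C.assoc, C.cancel, C.cancel', C.op_iv, C.iv_op, C.op_un, C.un_op]
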